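/- Fix K ≥ 1 and a threshold γ ∈ ℝ. The acceptance region of Pearson's statistic, namely the set { (z₁, …, z_K) ∈ ℝ^K : −∑_{k=1}^K log(1 − Φ(z_k)) < γ and −∑_{k=1}^K log Φ(z_k) < γ }, is a convex subset of ℝ^K. -/
import Mathlib


/-- The standard normal density φ(t) = (1/√(2π))·exp(−t²/2). -/
noncomputable def stdNormalPDF (t : ℝ) : ℝ :=
  (Real.sqrt (2 * Real.pi))⁻¹ * Real.exp (-t ^ 2 / 2)

/-- The standard normal cumulative distribution function Φ(t) = ∫_{−∞}^t φ(s) ds. -/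
noncomputable def stdNormalCDF (t : ℝ) : ℝ :=
  ∫ s in Set.Iic t, stdNormalPDF s

open MeasureTheory Set Real Filter

lemma pdf_eq' (t : ℝ) : stdNormalPDF t = (Real.sqrt (2 * Real.pi))⁻¹ * Real.exp (-(1/2) * t ^ 2) := by
  rw [stdNormalPDF]; ring_nf

lemma pdf_pos (t : ℝ) : 0 < stdNormalPDF t := by
  have h : (0:ℝ) < Real.sqrt (2 * Real.pi) :=
    Real.sqrt_pos.2 (by positivity)
  exact mul_pos (inv_pos.2 h) (Real.exp_pos _)

lemma pdf_cont : Continuous stdNormalPDF := by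
  unfold stdNormalPDF; fun_prop

lemma pdf_integrable : Integrable stdNormalPDF := by
  have := (integrable_exp_neg_mul_sq (by norm_num : (0:ℝ) < 1/2)).const_mul
    ((Real.sqrt (2 * Real.pi))⁻¹)
  exact this.congr (Eventually.of_forall fun t => by rw [pdf_eq'])

lemma pdf_total : ∫ x, stdNormalPDF x = 1 := by
  have h2 : ∫ x : ℝ, Real.exp (-(1/2) * x ^ 2) = Real.sqrt (π / (1/2)) :=
    integral_gaussian (1/2)
  have : ∫ x, stdNormalPDF x = (Real.sqrt (2 * Real.pi))⁻¹ * ∫ x : ℝ, Real.exp (-(1/2) * x ^ 2) := by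
    rw [← integral_const_mul]; congr 1; funext x; rw [pdf_eq']
  rw [this, h2]
  rw [show π / (1/2) = 2 * π by ring]
  exact inv_mul_cancel₀ (ne_of_gt (Real.sqrt_pos.2 (by positivity)))

lemma cdf_eq (t : ℝ) : stdNormalCDF t = stdNormalCDF 0 + ∫ x in (0:ℝ)..t, stdNormalPDF x := by
  rw [← intervalIntegral.integral_Iic_sub_Iic pdf_integrable.integrableOn
    pdf_integrable.integrableOn]
  show stdNormalCDF t = stdNormalCDF 0 + (stdNormalCDF t - stdNormalCDF 0)
  ring

lemma cdf_hasDeriv (t : ℝ) : HasDerivAt stdNormalCDF (stdNormalPDF t) t := by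
  have h : HasDerivAt (fun u => ∫ x in (0:ℝ)..u, stdNormalPDF x) (stdNormalPDF t) t :=
    intervalIntegral.integral_hasDerivAt_right
      (pdf_integrable.intervalIntegrable)
      pdf_cont.aestronglyMeasurable.stronglyMeasurableAtFilter
      pdf_cont.continuousAt
  have := (h.const_add (stdNormalCDF 0))
  refine this.congr_of_eventuallyEq (Eventually.of_forall fun u => ?_)
  exact cdf_eq u

lemma cdf_pos (t : ℝ) : 0 < stdNormalCDF t := by
  rw [stdNormalCDF]
  rw [setIntegral_pos_iff_support_of_nonneg_ae
    (Eventually.of_forall fun x => (pdf_pos x).le) pdf_integrable.integrableOn]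
  have : Function.support stdNormalPDF = univ := by
    ext x; simp [Function.mem_support, (pdf_pos x).ne']
  rw [this, univ_inter]
  simp

lemma cdf_add_Ioi (t : ℝ) : stdNormalCDF t + ∫ x in Ioi t, stdNormalPDF x = 1 := by
  rw [stdNormalCDF, intervalIntegral.integral_Iic_add_Ioi pdf_integrable.integrableOn
    pdf_integrable.integrableOn, pdf_total]

lemma cdf_lt_one (t : ℝ) : stdNormalCDF t < 1 := by
  have h := cdf_add_Ioi t
  have hpos : 0 < ∫ x in Ioi t, stdNormalPDF x := by
    rw [setIntegral_pos_iff_support_of_nonneg_ae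
      (Eventually.of_forall fun x => (pdf_pos x).le) pdf_integrable.integrableOn]
    have : Function.support stdNormalPDF = univ := by
      ext x; simp [Function.mem_support, (pdf_pos x).ne']
    rw [this, univ_inter]
    simp
  linarith

lemma one_sub_cdf (t : ℝ) : 1 - stdNormalCDF t = stdNormalCDF (-t) := by
  have heven : ∀ x : ℝ, stdNormalPDF (-x) = stdNormalPDF x := by
    intro x; rw [stdNormalPDF, stdNormalPDF, neg_pow]; ring_nf
  have : stdNormalCDF (-t) = ∫ x in Iic (-t), stdNormalPDF (-x) := by
    rw [stdNormalCDF]; congr 1; funext x; rw [heven]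
  rw [this, integral_comp_neg_Iic, neg_neg, ← cdf_add_Ioi t]
  ring

lemma pdf_hasDeriv (t : ℝ) : HasDerivAt stdNormalPDF (-t * stdNormalPDF t) t := by
  have h1 : HasDerivAt (fun x : ℝ => -x ^ 2 / 2) (-t) t := by
    have := ((hasDerivAt_pow 2 t).neg).div_const 2
    simpa using this.congr_deriv (by push_cast; ring)
  have h2 : HasDerivAt (fun x : ℝ => Real.exp (-x ^ 2 / 2))
      (Real.exp (-t ^ 2 / 2) * (-t)) t := h1.exp
  have := h2.const_mul ((Real.sqrt (2 * Real.pi))⁻¹)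
  refine HasDerivAt.congr_deriv (this.congr_of_eventuallyEq
    (Eventually.of_forall fun u => by rw [stdNormalPDF])) ?_
  rw [stdNormalPDF]; ring

lemma id_pdf_integrableOn : Integrable (fun s : ℝ => -s * stdNormalPDF s) := by
  have := ((integrable_mul_exp_neg_mul_sq (by norm_num : (0:ℝ) < 1/2)).const_mul
    (-(Real.sqrt (2 * Real.pi))⁻¹))
  refine this.congr (Eventually.of_forall fun s => ?_)
  simp only [pdf_eq']; ring

lemma pdf_tendsto_atBot : Tendsto stdNormalPDF atBot (nhds 0) := by
  have hsq : Tendsto (fun t : ℝ => t ^ 2) atBot atTop := by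
    have h : Tendsto (fun t : ℝ => -t) atBot atTop := tendsto_neg_atBot_atTop
    have := (tendsto_pow_atTop (n := 2) (by norm_num)).comp h
    refine this.congr fun x => ?_
    simp [Function.comp, neg_pow]
  have h1 : Tendsto (fun t : ℝ => -t ^ 2 / 2) atBot atBot := by
    have h2 : Tendsto (fun t : ℝ => t ^ 2 / 2) atBot atTop :=
      hsq.atTop_div_const (by norm_num)
    have := tendsto_neg_atTop_atBot.comp h2
    refine this.congr fun x => ?_
    simp [Function.comp, neg_div]
  have h3 : Tendsto (fun t : ℝ => Real.exp (-t ^ 2 / 2)) atBot (nhds 0) :=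
    Real.tendsto_exp_atBot.comp h1
  have h4 := h3.const_mul ((Real.sqrt (2 * Real.pi))⁻¹)
  rw [mul_zero] at h4
  exact h4.congr fun t => (stdNormalPDF.eq_def t).symm ▸ rfl

lemma pdf_eq_integral (t : ℝ) : stdNormalPDF t = ∫ s in Iic t, -s * stdNormalPDF s := by
  rw [MeasureTheory.integral_Iic_of_hasDerivAt_of_tendsto
    (pdf_cont.continuousWithinAt)
    (fun x _ => pdf_hasDeriv x)
    id_pdf_integrableOn.integrableOn
    pdf_tendsto_atBot]
  rw [sub_zero]

lemma key_ineq (t : ℝ) : 0 ≤ stdNormalPDF t + t * stdNormalCDF t := by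
  rcases le_or_gt 0 t with ht | ht
  · have := pdf_pos t
    have := cdf_pos t
    nlinarith
  · have h1 : -t * stdNormalCDF t ≤ stdNormalPDF t := by
      rw [pdf_eq_integral t, stdNormalCDF, ← integral_const_mul]
      refine setIntegral_mono_on
        (pdf_integrable.integrableOn.const_mul _)
        id_pdf_integrableOn.integrableOn
        measurableSet_Iic (fun x hx => ?_)
      have hx' : x ≤ t := hx
      have := (pdf_pos x).le
      nlinarith
    linarith

noncomputable def negLogCDF : ℝ → ℝ := fun t => -Real.log (stdNormalCDF t)

lemma negLogCDF_hasDeriv (t : ℝ) :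
    HasDerivAt negLogCDF (-(stdNormalPDF t / stdNormalCDF t)) t :=
  (HasDerivAt.log (cdf_hasDeriv t) (cdf_pos t).ne').neg

lemma deriv_negLogCDF : deriv negLogCDF = fun t => -(stdNormalPDF t / stdNormalCDF t) :=
  funext fun t => (negLogCDF_hasDeriv t).deriv

lemma deriv_negLogCDF_hasDeriv (t : ℝ) :
    HasDerivAt (fun t => -(stdNormalPDF t / stdNormalCDF t))
      (-((-t * stdNormalPDF t * stdNormalCDF t - stdNormalPDF t * stdNormalPDF t) /
        stdNormalCDF t ^ 2)) t :=
  (HasDerivAt.div (pdf_hasDeriv t) (cdf_hasDeriv t) (cdf_pos t).ne').neg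

lemma convexOn_negLogCDF : ConvexOn ℝ univ negLogCDF := by
  apply convexOn_of_deriv2_nonneg convex_univ
  · exact Continuous.continuousOn (by
      have : ∀ t, ContinuousAt negLogCDF t := fun t => (negLogCDF_hasDeriv t).continuousAt
      exact continuous_iff_continuousAt.2 this)
  · rw [interior_univ]
    exact fun x _ => (negLogCDF_hasDeriv x).differentiableAt.differentiableWithinAt
  · rw [interior_univ, deriv_negLogCDF]
    exact fun x _ => (deriv_negLogCDF_hasDeriv x).differentiableAt.differentiableWithinAt
  · rw [interior_univ]
    intro x _
    have h2 : deriv (deriv negLogCDF) x =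
        -((-x * stdNormalPDF x * stdNormalCDF x - stdNormalPDF x * stdNormalPDF x) /
          stdNormalCDF x ^ 2) := by
      rw [deriv_negLogCDF]
      exact (deriv_negLogCDF_hasDeriv x).deriv
    have h3 : deriv^[2] negLogCDF x = deriv (deriv negLogCDF) x := by
      simp [Function.iterate_succ, Function.comp]
    rw [h3, h2]
    have hp := pdf_pos x
    have hc := cdf_pos x
    have hk := key_ineq x
    have : -((-x * stdNormalPDF x * stdNormalCDF x - stdNormalPDF x * stdNormalPDF x) /
          stdNormalCDF x ^ 2) =
        stdNormalPDF x * (stdNormalPDF x + x * stdNormalCDF x) / stdNormalCDF x ^ 2 := by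
      ring
    rw [this]
    positivity

lemma convexOn_comp_neg {f : ℝ → ℝ} (hf : ConvexOn ℝ univ f) :
    ConvexOn ℝ univ (fun t => f (-t)) := by
  refine ⟨convex_univ, fun x _ y _ a b ha hb hab => ?_⟩
  have h := hf.2 (mem_univ (-x)) (mem_univ (-y)) ha hb hab
  have hxy : a • (-x) + b • (-y) = -(a • x + b • y) := by
    simp only [smul_eq_mul]; ring
  rw [hxy] at h
  exact h

lemma convexOn_sum_comp {f : ℝ → ℝ} (hf : ConvexOn ℝ univ f) (K : ℕ) :
    ConvexOn ℝ univ (fun z : Fin K → ℝ => ∑ k, f (z k)) := by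
  refine ⟨convex_univ, fun x _ y _ a b ha hb hab => ?_⟩
  simp only [Pi.add_apply, Pi.smul_apply, smul_eq_mul]
  calc ∑ k, f (a * x k + b * y k) ≤ ∑ k, (a * f (x k) + b * f (y k)) :=
        Finset.sum_le_sum fun k _ => hf.2 (mem_univ _) (mem_univ _) ha hb hab
    _ = a * ∑ k, f (x k) + b * ∑ k, f (y k) := by
        rw [Finset.sum_add_distrib, Finset.mul_sum, Finset.mul_sum]

/-- For K ≥ 1 and γ ∈ ℝ, the acceptance region of Pearson's statistic,
{ z ∈ ℝ^K : −∑_k log(1 − Φ(z_k)) < γ and −∑_k log Φ(z_k) < γ }, is a convex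
subset of ℝ^K. -/
theorem stmt_9 (K : ℕ) (hK : 1 ≤ K) (γ : ℝ) :
    Convex ℝ
      {z : Fin K → ℝ |
        -∑ k, Real.log (1 - stdNormalCDF (z k)) < γ ∧
        -∑ k, Real.log (stdNormalCDF (z k)) < γ} := by
  have hg : ConvexOn ℝ univ (fun t : ℝ => -Real.log (1 - stdNormalCDF t)) := by
    have h := convexOn_comp_neg convexOn_negLogCDF
    have he : (fun t : ℝ => -Real.log (1 - stdNormalCDF t)) = fun t => negLogCDF (-t) :=
      funext fun t => by rw [negLogCDF, one_sub_cdf]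
    rw [he]
    exact h
  have hf : ConvexOn ℝ univ (fun t : ℝ => -Real.log (stdNormalCDF t)) := convexOn_negLogCDF
  have hG : ConvexOn ℝ univ
      (fun z : Fin K → ℝ => ∑ k, -Real.log (1 - stdNormalCDF (z k))) :=
    convexOn_sum_comp hg K
  have hF : ConvexOn ℝ univ
      (fun z : Fin K → ℝ => ∑ k, -Real.log (stdNormalCDF (z k))) :=
    convexOn_sum_comp hf K
  have h1 := hG.convex_lt γ
  have h2 := hF.convex_lt γ
  have hset : {z : Fin K → ℝ |
        -∑ k, Real.log (1 - stdNormalCDF (z k)) < γ ∧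
        -∑ k, Real.log (stdNormalCDF (z k)) < γ} =
      ({z ∈ univ | (fun z : Fin K → ℝ => ∑ k, -Real.log (1 - stdNormalCDF (z k))) z < γ} ∩
       {z ∈ univ | (fun z : Fin K → ℝ => ∑ k, -Real.log (stdNormalCDF (z k))) z < γ}) := by
    ext z
    simp [Finset.sum_neg_distrib, and_comm]
  rw [hset]
  exact h1.inter h2
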